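/- Let 𝔗 be a BHT of a signal ((V,E), f) over a finite connected graph. If v ≺_T u (v is a strict ancestor of u in the BHT) and w lies in the same connected component as u in the sublevel graph G_t for some threshold t < f(𝔏(v)), then v ⪯_T w (v is an ancestor of w in the BHT). -/

import Mathlib

open scoped Classical

/-- A (multi)graph given by source and target maps on an edge type. -/
structure SigGraph (V E : Type*) where
  src : E → V
  tgt : E → V

namespace SigGraph

variable {V E : Type*} (G : SigGraph V E)

/-- `e` is an edge joining `x` and `y`. -/
def Ends (e : E) (x y : V) : Prop :=
  (G.src e = x ∧ G.tgt e = y) ∨ (G.src e = y ∧ G.tgt e = x)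

/-- The graph is connected. -/
def Connected : Prop :=
  ∀ a b : V, Relation.ReflTransGen (fun x y => ∃ e, G.Ends e x y) a b

/-- Extension of a vertex signal to vertices and edges, `f(e) = max f(V(e))`. -/
def sig (f : V → ℝ) : V ⊕ E → ℝ
  | .inl v => f v
  | .inr e => max (f (G.src e)) (f (G.tgt e))

/-- `pos` realizes a `G`-ordering: a total ordering of `V ⊕ E` along which the
signal is nondecreasing and every vertex precedes each edge incident to it. -/
def IsGOrdering (f : V → ℝ) (pos : V ⊕ E → ℕ) : Prop :=
  Function.Injective pos ∧
  (∀ a b, pos a ≤ pos b → G.sig f a ≤ G.sig f b) ∧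
  (∀ e : E, pos (.inl (G.src e)) < pos (.inr e) ∧ pos (.inl (G.tgt e)) < pos (.inr e))

/-- Connectivity within the subgraph `G_{<k}` of elements with position `< k`. -/
def ConnB (pos : V ⊕ E → ℕ) (k : ℕ) (a b : V) : Prop :=
  pos (.inl a) < k ∧ pos (.inl b) < k ∧
    Relation.ReflTransGen (fun x y => ∃ e, pos (.inr e) < k ∧ G.Ends e x y) a b

/-- `m` is the `≺`-minimum of the connected component of `v` in `G_{<k}`. -/
def IsCompMin (pos : V ⊕ E → ℕ) (k : ℕ) (m v : V) : Prop :=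
  G.ConnB pos k m v ∧ ∀ w, G.ConnB pos k v w → pos (.inl m) ≤ pos (.inl w)

/-- The `≺`-maximal endpoint of an edge. -/
def maxEnd (pos : V ⊕ E → ℕ) (e : E) : V :=
  if pos (.inl (G.src e)) ≤ pos (.inl (G.tgt e)) then G.tgt e else G.src e

/-- `(p, L)` is a basin hierarchy tree of the signal `(G, f)` with respect to the
`G`-ordering `pos`, rooted at the `≺`-minimal vertex `r`, with linking-vertex map `L`. -/
structure IsBHT (f : V → ℝ) (pos : V ⊕ E → ℕ) (r : V) (p : V → V) (L : V → V) : Prop where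
  ordering : G.IsGOrdering f pos
  root_min : ∀ v, pos (.inl r) ≤ pos (.inl v)
  root_fix : p r = r
  reaches : ∀ v, ∃ n, p^[n] v = r
  spec : ∀ v, v ≠ r → ∃ e : E,
    G.IsCompMin pos (pos (.inr e)) v v ∧
    G.IsCompMin pos (pos (.inr e) + 1) (p v) v ∧
    L v = G.maxEnd pos e

end SigGraph

/-- `u` is an ancestor of `v` in the tree with parent map `p` (`u ⪯_T v`). -/
def Anc {V : Type*} (p : V → V) (u v : V) : Prop := ∃ n, p^[n] v = u

/-- `f(𝔏(v))`, with value `+∞` at the root. -/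
noncomputable def fLink {V : Type*} (f : V → ℝ) (r : V) (L : V → V) (v : V) : EReal :=
  if v = r then ⊤ else (f (L v) : EReal)

/-- The persistence `pers(v) = f(𝔏(v)) - f(v)` of a vertex in a BHT. -/
noncomputable def persBHT {V : Type*} (f : V → ℝ) (r : V) (L : V → V) (v : V) : EReal :=
  fLink f r L v - (f v : EReal)

namespace SigGraph

variable {V E : Type*} (G : SigGraph V E)

/-- The component of `v` dies at the edge `e`: `v` is the minimum of its component
just before `e` is added, and no longer after. -/
def DiesAt (pos : V ⊕ E → ℕ) (v : V) (e : E) : Prop :=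
  G.IsCompMin pos (pos (.inr e)) v v ∧ ¬ G.IsCompMin pos (pos (.inr e) + 1) v v

/-- The death value of the component created by `v` (`+∞` if permanent). -/
noncomputable def deathVal (f : V → ℝ) (pos : V ⊕ E → ℕ) (v : V) : EReal :=
  if h : ∃ e, G.DiesAt pos v e then ((G.sig f (.inr h.choose) : ℝ) : EReal) else ⊤

/-- The degree-0 persistence diagram of `(G, f)`, as a multiset of intervals
`[birth, death)` (including trivial intervals). -/
noncomputable def PD0 [Fintype V] (f : V → ℝ) (pos : V ⊕ E → ℕ) : Multiset (EReal × EReal) :=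
  Finset.univ.val.map fun v : V => ((f v : EReal), G.deathVal f pos v)

end SigGraph

/-- The nontrivial part of a multiset of intervals. -/
noncomputable def nontriv (M : Multiset (EReal × EReal)) : Multiset (EReal × EReal) :=
  M.filter fun ab => ab.1 < ab.2

/-- The 0-low-persistence filter associated to a BHT `(p, L)` rooted at `r`. -/
noncomputable def LPF {V : Type*} [Fintype V] (f : V → ℝ) (r : V) (p L : V → V)
    (ε : ℝ) (v : V) : ℝ :=
  (insert (f v) ((Finset.univ.filter fun u => Anc p u v ∧ persBHT f r L u < (ε : EReal)).image
    fun u => f (L u))).max' (Finset.insert_nonempty _ _)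

namespace SigGraph

variable {V E : Type*} (G : SigGraph V E)

/-- Connectivity within the sublevel graph `G_t` of all elements with signal
value `≤ t`. -/
def ConnVal (f : V → ℝ) (t : ℝ) (a b : V) : Prop :=
  f a ≤ t ∧ f b ≤ t ∧
    Relation.ReflTransGen
      (fun x y => ∃ e, f (G.src e) ≤ t ∧ f (G.tgt e) ≤ t ∧ G.Ends e x y) a b

end SigGraph

section AuxBHT

variable {V E : Type*} {G : SigGraph V E}

lemma ends_symm' {e : E} {x y : V} (h : G.Ends e x y) : G.Ends e y x := by
  rcases h with ⟨h1, h2⟩ | ⟨h1, h2⟩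
  · exact Or.inr ⟨h1, h2⟩
  · exact Or.inl ⟨h1, h2⟩

lemma connB_refl' {pos : V ⊕ E → ℕ} {k : ℕ} {a : V} (h : pos (.inl a) < k) :
    G.ConnB pos k a a := ⟨h, h, .refl⟩

lemma connB_symm' {pos : V ⊕ E → ℕ} {k : ℕ} {a b : V} (h : G.ConnB pos k a b) :
    G.ConnB pos k b a := by
  refine ⟨h.2.1, h.1, ?_⟩
  have hs : Symmetric fun x y => ∃ e, pos (.inr e) < k ∧ G.Ends e x y :=
    fun x y ⟨e, he, hxy⟩ => ⟨e, he, ends_symm' hxy⟩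
  haveI : Std.Symm (fun x y => ∃ e, pos (.inr e) < k ∧ G.Ends e x y) := ⟨fun a b h => hs h⟩
  exact (Relation.ReflTransGen.symmetric (r := fun x y => ∃ e, pos (.inr e) < k ∧ G.Ends e x y)).symm _ _ h.2.2

lemma connB_trans' {pos : V ⊕ E → ℕ} {k : ℕ} {a b c : V}
    (h1 : G.ConnB pos k a b) (h2 : G.ConnB pos k b c) : G.ConnB pos k a c :=
  ⟨h1.1, h2.2.1, h1.2.2.trans h2.2.2⟩

lemma connB_mono' {pos : V ⊕ E → ℕ} {k k' : ℕ} (hk : k ≤ k') {a b : V}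
    (h : G.ConnB pos k a b) : G.ConnB pos k' a b :=
  ⟨lt_of_lt_of_le h.1 hk, lt_of_lt_of_le h.2.1 hk,
    Relation.ReflTransGen.mono (fun x y ⟨e, he, hxy⟩ => ⟨e, lt_of_lt_of_le he hk, hxy⟩) _ _ h.2.2⟩

variable {pos : V ⊕ E → ℕ} {r : V} {p : V → V} {k : V → ℕ}

lemma p_pos_lt' (hinj : Function.Injective pos)
    (hre : ∀ v, ∃ n, p^[n] v = r)
    (h2 : ∀ x, x ≠ r → G.IsCompMin pos (k x + 1) (p x) x)
    {x : V} (hx : x ≠ r) : pos (.inl (p x)) < pos (.inl x) := by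
  have hne : p x ≠ x := by
    intro h
    obtain ⟨n, hn⟩ := hre x
    rw [Function.iterate_fixed h] at hn
    exact hx hn
  have hc := h2 x hx
  have hle : pos (.inl (p x)) ≤ pos (.inl x) := hc.2 x (connB_refl' hc.1.2.1)
  exact lt_of_le_of_ne hle fun h => hne (Sum.inl_injective (hinj h))

lemma k_chain' (hinj : Function.Injective pos)
    (hre : ∀ v, ∃ n, p^[n] v = r)
    (h2 : ∀ x, x ≠ r → G.IsCompMin pos (k x + 1) (p x) x)
    {x : V} (hx : x ≠ r) (hpx : p x ≠ r) : k x < k (p x) := by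
  by_contra hcon
  push_neg at hcon
  have hcx := h2 x hx
  have hcp := h2 (p x) hpx
  have hc1 : G.ConnB pos (k x + 1) (p (p x)) (p x) :=
    connB_mono' (by omega) hcp.1
  have hc2 : G.ConnB pos (k x + 1) x (p (p x)) :=
    connB_trans' (connB_symm' hcx.1) (connB_symm' hc1)
  have hle := hcx.2 _ hc2
  have hlt := p_pos_lt' hinj hre h2 hpx
  omega

lemma anc_connB' (hinj : Function.Injective pos)
    (hfix : p r = r) (hre : ∀ v, ∃ n, p^[n] v = r)
    (h1 : ∀ x, x ≠ r → G.IsCompMin pos (k x) x x)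
    (h2 : ∀ x, x ≠ r → G.IsCompMin pos (k x + 1) (p x) x) :
    ∀ n v u, v ≠ r → p^[n] u = v → G.ConnB pos (k v) v u ∧ (u ≠ v → k u < k v) := by
  intro n
  induction n with
  | zero =>
    intro v u hv h
    simp only [Function.iterate_zero, id_eq] at h
    subst h
    exact ⟨(h1 u hv).1, fun h' => absurd rfl h'⟩
  | succ n IH =>
    intro v u hv h
    rw [Function.iterate_succ_apply] at h
    by_cases huv : u = v
    · subst huv
      exact ⟨(h1 u hv).1, fun h' => absurd rfl h'⟩
    · have hur : u ≠ r := by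
        rintro rfl
        rw [hfix, Function.iterate_fixed hfix] at h
        exact hv h.symm
      have hpr : p u ≠ r := by
        intro h'
        rw [h', Function.iterate_fixed hfix] at h
        exact hv h.symm
      obtain ⟨hconn, hk⟩ := IH v (p u) hv h
      have hku : k u < k v := by
        by_cases hpv : p u = v
        · have := k_chain' hinj hre h2 hur hpr
          rwa [hpv] at this
        · exact (k_chain' hinj hre h2 hur hpr).trans (hk hpv)
      exact ⟨connB_trans' hconn (connB_mono' (by omega) (h2 u hur).1), fun _ => hku⟩

lemma connB_anc' (hinj : Function.Injective pos)
    (hroot : ∀ v, pos (.inl r) ≤ pos (.inl v))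
    (hre : ∀ v, ∃ n, p^[n] v = r)
    (h1 : ∀ x, x ≠ r → G.IsCompMin pos (k x) x x)
    (h2 : ∀ x, x ≠ r → G.IsCompMin pos (k x + 1) (p x) x) :
    ∀ n v w, v ≠ r → pos (.inl w) = n → G.ConnB pos (k v) v w → Anc p v w := by
  intro n
  induction n using Nat.strong_induction_on with
  | _ n IH =>
    intro v w hv hn hc
    by_cases hwv : w = v
    · exact ⟨0, hwv⟩
    · have hle : pos (.inl v) ≤ pos (.inl w) := (h1 v hv).2 w hc
      have hlt : pos (.inl v) < pos (.inl w) :=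
        lt_of_le_of_ne hle fun h => hwv (Sum.inl_injective (hinj h)).symm
      have hwr : w ≠ r := by
        rintro rfl
        exact absurd (hroot v) (by omega)
      have hkw : k w < k v := by
        by_contra hcon
        push_neg at hcon
        have := (h1 w hwr).2 v (connB_mono' hcon (connB_symm' hc))
        omega
      have hpw : G.ConnB pos (k v) v (p w) :=
        connB_trans' hc (connB_mono' (by omega) (connB_symm' (h2 w hwr).1))
      have hplt : pos (.inl (p w)) < pos (.inl w) := p_pos_lt' hinj hre h2 hwr
      obtain ⟨m, hm⟩ := IH (pos (.inl (p w))) (by omega) v (p w) hv rfl hpw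
      exact ⟨m + 1, by rw [Function.iterate_succ_apply, hm]⟩

end AuxBHT

/-- If `v ≺_T u` is a strict ancestor in a Basin Hierarchy Tree and `w` lies in the
same connected component as `u` in the sublevel graph `G_t` for some threshold
`t < f(𝔏(v))`, then `v ⪯_T w`. -/
theorem bht_component_ancestor {V E : Type*} [Fintype V] [Fintype E]
    (G : SigGraph V E) (hG : G.Connected) (f : V → ℝ) (pos : V ⊕ E → ℕ)
    (r : V) (p L : V → V) (hbht : G.IsBHT f pos r p L)
    (u v w : V) (hanc : Anc p v u) (hne : v ≠ u)
    (t : ℝ) (ht : (t : EReal) < fLink f r L v)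
    (hconn : G.ConnVal f t u w) :
    Anc p v w := by
  classical
  obtain ⟨⟨hinj, hmono, hinc⟩, hroot, hfix, hre, hspec⟩ := hbht
  by_cases hvr : v = r
  · subst hvr; exact hre w
  choose ed hed1 hed2 hed3 using hspec
  set k : V → ℕ := fun x => if hx : x = r then 0 else pos (.inr (ed x hx)) with hkdef
  have hk1 : ∀ x, x ≠ r → G.IsCompMin pos (k x) x x := by
    intro x hx
    simpa only [hkdef, dif_neg hx] using hed1 x hx
  have hk2 : ∀ x, x ≠ r → G.IsCompMin pos (k x + 1) (p x) x := by
    intro x hx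
    simpa only [hkdef, dif_neg hx] using hed2 x hx
  have hkv : k v = pos (.inr (ed v hvr)) := dif_neg hvr
  -- `t < f (L v)` in ℝ
  have htR : t < f (L v) := by
    have : fLink f r L v = ((f (L v) : ℝ) : EReal) := if_neg hvr
    rw [this] at ht
    exact_mod_cast ht
  -- `f (L v)` is the signal value of the death edge
  have hLs : f (L v) = G.sig f (.inr (ed v hvr)) := by
    rw [hed3 v hvr]
    unfold SigGraph.maxEnd
    split_ifs with h
    · have := hmono (.inl (G.src (ed v hvr))) (.inl (G.tgt (ed v hvr))) h
      simp only [SigGraph.sig] at this ⊢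
      exact (max_eq_right this).symm
    · have := hmono (.inl (G.tgt (ed v hvr))) (.inl (G.src (ed v hvr))) (le_of_not_ge h)
      simp only [SigGraph.sig] at this ⊢
      exact (max_eq_left this).symm
  -- anything with signal ≤ t lies strictly below `k v` in the ordering
  have hsmall : ∀ a : V ⊕ E, G.sig f a ≤ t → pos a < k v := by
    intro a ha
    rw [hkv]
    by_contra hcon
    push_neg at hcon
    have := hmono _ _ hcon
    rw [← hLs] at this
    linarith
  -- transfer the sublevel connectivity to `G_{<k v}` connectivity
  have hcw : G.ConnB pos (k v) u w := by
    obtain ⟨hu, hw, hpath⟩ := hconn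
    refine ⟨hsmall (.inl u) hu, hsmall (.inl w) hw, Relation.ReflTransGen.mono ?_ _ _ hpath⟩
    rintro x y ⟨e, he1, he2, he3⟩
    exact ⟨e, hsmall (.inr e) (max_le he1 he2), he3⟩
  obtain ⟨n, hn⟩ := hanc
  have hvu : G.ConnB pos (k v) v u :=
    (anc_connB' hinj hfix hre hk1 hk2 n v u hvr hn).1
  exact connB_anc' hinj hroot hre hk1 hk2 (pos (.inl w)) v w hvr rfl
    (connB_trans' hvu hcw)
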